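/- For every (x,y) ∈ W and every ζ ∈ K, if g(ζ) = g(ι(x,y)) for all g ∈ G, then ζ = ι(x,y). Consequently, the quotient map q restricted to ι(W) is injective, and it is a homeomorphism of ι(W) onto its image in the quotient space K/∼. -/

import Mathlib

open MeasureTheory

/-- `Wt M` is the set `W = {(x,y) ∈ M × M : x ≠ y}`, a topological subspace of `M × M`. -/
abbrev Wt (M : Type*) [MetricSpace M] := {p : M × M // p.1 ≠ p.2}

/-- `g : W → ℝ` satisfies the G-inequality. -/
def GIneq {M : Type*} [MetricSpace M] (g : Wt M → ℝ) : Prop :=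
  ∀ (x u y : M) (hxu : x ≠ u) (huy : u ≠ y) (hxy : x ≠ y),
    dist x y * g ⟨(x, y), hxy⟩ ≤ dist x u * g ⟨(x, u), hxu⟩ + dist u y * g ⟨(u, y), huy⟩

/-- The cone `G` of continuous functions on `K = βW` satisfying the G-inequality
on points of `W`. -/
def GSet (M : Type*) [MetricSpace M] : Set (StoneCech (Wt M) → ℝ) :=
  {g | Continuous g ∧ GIneq fun p => g (stoneCechUnit p)}

/-- The Choquet-like quasi-order `μ ≼ ν`. -/
def Preceq {M : Type*} [MetricSpace M] [MeasurableSpace (StoneCech (Wt M))]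
    (μ ν : Measure (StoneCech (Wt M))) : Prop :=
  ∀ g ∈ GSet M, ∫ ζ, g ζ ∂μ ≤ ∫ ζ, g ζ ∂ν

/-- `μ` is `≼`-minimal among finite positive Radon Borel measures. -/
def IsMinimal {M : Type*} [MetricSpace M] [MeasurableSpace (StoneCech (Wt M))]
    (μ : Measure (StoneCech (Wt M))) : Prop :=
  ∀ ν : Measure (StoneCech (Wt M)),
    IsFiniteMeasure ν → ν.InnerRegular → Preceq ν μ → Preceq μ ν

/-- The equivalence relation `ζ ∼ ω` iff `g ζ = g ω` for all `g ∈ G`. -/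
def gSetoid (M : Type*) [MetricSpace M] : Setoid (StoneCech (Wt M)) where
  r ζ ω := ∀ g ∈ GSet M, g ζ = g ω
  iseqv := ⟨fun _ _ _ => rfl, fun h g hg => (h g hg).symm,
    fun h1 h2 g hg => (h1 g hg).trans (h2 g hg)⟩

/-- The quotient map `q : K → K/∼`. -/
def gq (M : Type*) [MetricSpace M] :
    StoneCech (Wt M) → Quotient (gSetoid M) := Quotient.mk _


namespace Stmt7Aux

lemma psi_mono {a b : ℝ} (ha : 0 ≤ a) (hab : a ≤ b) : a/(1+a) ≤ b/(1+b) := by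
  rw [div_le_div_iff₀ (by linarith) (by linarith)]; nlinarith

lemma psi_slack {s t : ℝ} (hs : 0 ≤ s) (ht : 0 ≤ t) :
    s*t/((1+s)*(1+t)) + (s+t)/(1+s+t) ≤ s/(1+s) + t/(1+t) := by
  have h1 : (0:ℝ) < 1+s := by linarith
  have h2 : (0:ℝ) < 1+t := by linarith
  have h3 : (0:ℝ) < 1+s+t := by linarith
  have key : s/(1+s) + t/(1+t) - (s+t)/(1+s+t)
      = s*t*(2+s+t)/((1+s)*((1+t)*(1+s+t))) := by
    field_simp
    ring
  have h4 : s*t/((1+s)*(1+t)) ≤ s*t*(2+s+t)/((1+s)*((1+t)*(1+s+t))) := by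
    rw [div_le_div_iff₀ (by positivity) (by positivity)]
    nlinarith [mul_nonneg (mul_nonneg hs ht) (mul_nonneg h1.le h2.le)]
  linarith

lemma min_bound {s L : ℝ} (hs : 0 ≤ s) (hL : 0 ≤ L) : min 1 (L*s) ≤ (1+L)*s/(1+s) := by
  rcases le_total (L*s) 1 with h | h
  · rw [min_eq_right h, le_div_iff₀ (by linarith)]
    nlinarith
  · rw [min_eq_left h, le_div_iff₀ (by linarith)]
    nlinarith

lemma key_case (L T s t r hxy huy : ℝ)
    (hL : 0 < L) (hT : 0 < T)
    (hs : 0 < s) (ht : 0 < t) (hr : 0 < r) (hrst : r ≤ s + t)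
    (hxy0 : 0 ≤ hxy) (hxy1 : hxy ≤ 1) (huy0 : 0 ≤ huy)
    (lip : hxy - huy ≤ L * s) (hbt : t ≤ T) :
    r/(1+r) + (1/((1+L)*(1+T))) * (r * hxy) ≤
      s/(1+s) + (1/((1+L)*(1+T))) * (s * 1)
      + (t/(1+t) + (1/((1+L)*(1+T))) * (t * huy)) := by
  set c := 1/((1+L)*(1+T)) with hcdef
  have hc : 0 < c := by positivity
  have h1 : t*(hxy - huy) ≤ t * min 1 (L*s) :=
    mul_le_mul_of_nonneg_left (le_min (by linarith) lip) ht.le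
  have h2 : r*hxy ≤ s*hxy + t*hxy := by nlinarith
  have h3 : s*hxy ≤ s := by nlinarith
  have e0 : r*hxy - s - t*huy ≤ t * min 1 (L*s) := by
    have h4 : t*hxy - t*huy = t*(hxy-huy) := by ring
    linarith
  have e2 : c * (t * min 1 (L*s)) ≤ s*t/((1+T)*(1+s)) := by
    have h5 : t * min 1 (L*s) ≤ t * ((1+L)*s/(1+s)) :=
      mul_le_mul_of_nonneg_left (min_bound hs.le hL.le) ht.le
    have heq : c * (t * ((1+L)*s/(1+s))) = s*t/((1+T)*(1+s)) := by
      rw [hcdef]; field_simp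
    calc c * (t * min 1 (L*s)) ≤ c * (t * ((1+L)*s/(1+s))) :=
          mul_le_mul_of_nonneg_left h5 hc.le
      _ = s*t/((1+T)*(1+s)) := heq
  have e3 : s*t/((1+T)*(1+s)) ≤ s*t/((1+s)*(1+t)) := by
    rw [div_le_div_iff₀ (by positivity) (by positivity)]
    nlinarith [mul_nonneg (mul_nonneg (mul_pos hs ht).le (by linarith : (0:ℝ) ≤ 1+s))
      (by linarith : (0:ℝ) ≤ T - t)]
  have e4 : r/(1+r) ≤ (s+t)/(1+s+t) := by
    have := psi_mono hr.le hrst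
    have hrw : (1:ℝ)+(s+t) = 1+s+t := by ring
    rwa [hrw] at this
  have e5 := psi_slack hs.le ht.le
  have e6 : c*(r*hxy) = c*(r*hxy - s - t*huy) + c*s + c*(t*huy) := by ring
  have e7 : c*(r*hxy - s - t*huy) ≤ c*(t * min 1 (L*s)) :=
    mul_le_mul_of_nonneg_left e0 hc.le
  have e8 : c*(s*1) = c*s := by ring
  linarith

lemma key_ineq (L T s t r hxy hxu huy : ℝ)
    (hL : 0 < L) (hT : 0 < T)
    (hs : 0 < s) (ht : 0 < t) (hr : 0 < r) (hrst : r ≤ s + t)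
    (hxy0 : 0 ≤ hxy) (hxy1 : hxy ≤ 1)
    (hxu0 : 0 ≤ hxu) (hxu1 : hxu ≤ 1)
    (huy0 : 0 ≤ huy) (huy1 : huy ≤ 1)
    (lip1 : hxy - huy ≤ L * s) (lip2 : hxy - hxu ≤ L * t)
    (bd1 : hxu < 1 → s ≤ T) (bd2 : huy < 1 → t ≤ T)
    (hdisj : ¬(hxu < 1 ∧ huy < 1)) :
    r/(1+r) + (1/((1+L)*(1+T))) * (r * hxy) ≤
      (s/(1+s) + (1/((1+L)*(1+T))) * (s * hxu))
      + (t/(1+t) + (1/((1+L)*(1+T))) * (t * huy)) := by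
  set c := 1/((1+L)*(1+T)) with hcdef
  have hc : 0 < c := by positivity
  by_cases h1 : hxu < 1
  · have huy_eq : huy = 1 := le_antisymm huy1 (not_lt.1 fun h2 => hdisj ⟨h1, h2⟩)
    have := key_case L T t s r hxy hxu hL hT ht hs hr (by linarith) hxy0 hxy1 hxu0
      lip2 (bd1 h1)
    rw [huy_eq]
    rw [← hcdef] at this
    linarith
  · have hxu_eq : hxu = 1 := le_antisymm hxu1 (not_lt.1 h1)
    by_cases h2 : huy < 1
    · have := key_case L T s t r hxy huy hL hT hs ht hr hrst hxy0 hxy1 huy0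
        lip1 (bd2 h2)
      rw [hxu_eq]
      rw [← hcdef] at this
      linarith
    · have huy_eq : huy = 1 := le_antisymm huy1 (not_lt.1 h2)
      rw [hxu_eq, huy_eq]
      have e1 : r*hxy ≤ s + t := by nlinarith
      have e2 : c*(r*hxy) ≤ c*(s+t) := mul_le_mul_of_nonneg_left e1 hc.le
      have e3 : c*(s+t) = c*(s*1) + c*(t*1) := by ring
      have e4 : r/(1+r) ≤ (s+t)/(1+s+t) := by
        have := psi_mono hr.le hrst
        have hrw : (1:ℝ)+(s+t) = 1+s+t := by ring
        rwa [hrw] at this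
      have e5 := psi_slack hs.le ht.le
      have e6 : 0 ≤ s*t/((1+s)*(1+t)) := by positivity
      linarith


variable {M : Type*} [MetricSpace M]

/-- The bump function `h`. -/
noncomputable def hfun (a b : M) (δ : ℝ) : Wt M → ℝ :=
  fun w => min 1 (max 0 ((2/δ) * (max (dist w.1.1 a) (dist w.1.2 b) - δ/2)))

lemma hfun_nonneg (a b : M) (δ : ℝ) (w : Wt M) : 0 ≤ hfun a b δ w :=
  le_min zero_le_one (le_max_left _ _)

lemma hfun_le_one (a b : M) (δ : ℝ) (w : Wt M) : hfun a b δ w ≤ 1 :=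
  min_le_left _ _

lemma clamp_lip {k m1 m2 e cc : ℝ} (hk : 0 ≤ k) (he : 0 ≤ e) (hm : m1 ≤ m2 + e) :
    min 1 (max 0 (k*(m1 - cc))) ≤ min 1 (max 0 (k*(m2 - cc))) + k*e := by
  have hke : 0 ≤ k*e := mul_nonneg hk he
  have h1 : k*(m1-cc) ≤ k*(m2-cc) + k*e := by nlinarith
  rcases max_cases (0:ℝ) (k*(m1-cc)) with ⟨hA, hA'⟩ | ⟨hA, hA'⟩ <;>
    rcases max_cases (0:ℝ) (k*(m2-cc)) with ⟨hB, hB'⟩ | ⟨hB, hB'⟩ <;>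
    rcases min_cases (1:ℝ) (max 0 (k*(m1-cc))) with ⟨hC, hC'⟩ | ⟨hC, hC'⟩ <;>
    rcases min_cases (1:ℝ) (max 0 (k*(m2-cc))) with ⟨hD, hD'⟩ | ⟨hD, hD'⟩ <;>
    linarith

lemma hfun_lip1 (a b : M) {δ : ℝ} (hδ : 0 < δ) {x u y : M} (hxy : x ≠ y) (huy : u ≠ y) :
    hfun a b δ ⟨(x,y),hxy⟩ - hfun a b δ ⟨(u,y),huy⟩ ≤ (2/δ) * dist x u := by
  have hk : (0:ℝ) ≤ 2/δ := by positivity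
  have hm : max (dist x a) (dist y b) ≤ max (dist u a) (dist y b) + dist x u := by
    apply max_le
    · calc dist x a ≤ dist x u + dist u a := dist_triangle _ _ _
        _ ≤ max (dist u a) (dist y b) + dist x u := by
            have := le_max_left (dist u a) (dist y b); linarith
    · have := le_max_right (dist u a) (dist y b)
      have := dist_nonneg (x := x) (y := u)
      linarith
  have := clamp_lip (cc := δ/2) hk dist_nonneg hm
  simp only [hfun]
  linarith

lemma hfun_lip2 (a b : M) {δ : ℝ} (hδ : 0 < δ) {x u y : M} (hxy : x ≠ y) (hxu : x ≠ u) :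
    hfun a b δ ⟨(x,y),hxy⟩ - hfun a b δ ⟨(x,u),hxu⟩ ≤ (2/δ) * dist u y := by
  have hk : (0:ℝ) ≤ 2/δ := by positivity
  have hm : max (dist x a) (dist y b) ≤ max (dist x a) (dist u b) + dist u y := by
    apply max_le
    · have := le_max_left (dist x a) (dist u b)
      have := dist_nonneg (x := u) (y := y)
      linarith
    · calc dist y b ≤ dist y u + dist u b := dist_triangle _ _ _
        _ ≤ max (dist x a) (dist u b) + dist u y := by
            have := le_max_right (dist x a) (dist u b)
            rw [dist_comm y u] at *
            linarith
  have := clamp_lip (cc := δ/2) hk dist_nonneg hm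
  simp only [hfun]
  linarith

lemma hfun_lt_one (a b : M) {δ : ℝ} (hδ : 0 < δ) {x u : M} (hxu : x ≠ u)
    (h : hfun a b δ ⟨(x,u),hxu⟩ < 1) : dist x a < δ ∧ dist u b < δ := by
  simp only [hfun] at h
  have h1 : max 0 ((2/δ) * (max (dist x a) (dist u b) - δ/2)) < 1 := by
    rcases min_cases (1:ℝ) (max 0 ((2/δ) * (max (dist x a) (dist u b) - δ/2))) with
      ⟨hC, hC'⟩ | ⟨hC, hC'⟩ <;> linarith
  have h2 : (2/δ) * (max (dist x a) (dist u b) - δ/2) < 1 :=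
    lt_of_le_of_lt (le_max_right _ _) h1
  have h3 : max (dist x a) (dist u b) < δ := by
    have hδ' : (0:ℝ) < 2/δ := by positivity
    by_contra hcon
    push_neg at hcon
    have e1 : (2/δ)*(δ/2) ≤ (2/δ)*(max (dist x a) (dist u b) - δ/2) :=
      mul_le_mul_of_nonneg_left (by linarith) hδ'.le
    have e2 : (2/δ)*(δ/2) = 1 := by field_simp
    linarith
  exact ⟨lt_of_le_of_lt (le_max_left _ _) h3, lt_of_le_of_lt (le_max_right _ _) h3⟩

lemma hfun_base (a b : M) {δ : ℝ} (hδ : 0 < δ) (hab : a ≠ b) :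
    hfun a b δ ⟨(a,b),hab⟩ = 0 := by
  simp only [hfun, dist_self, max_self]
  have : (2/δ) * (0 - δ/2) = -1 := by field_simp; ring
  rw [this]
  norm_num

lemma continuous_hfun (a b : M) (δ : ℝ) : Continuous (hfun a b δ) := by
  apply continuous_const.min
  apply continuous_const.max
  apply Continuous.mul continuous_const
  apply Continuous.sub _ continuous_const
  exact ((continuous_fst.comp continuous_subtype_val).dist continuous_const).max
    ((continuous_snd.comp continuous_subtype_val).dist continuous_const)

lemma continuous_g0 : Continuous (fun w : Wt M => 1/(1 + dist w.1.1 w.1.2)) := by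
  apply Continuous.div continuous_const
  · exact continuous_const.add ((continuous_fst.comp continuous_subtype_val).dist
      (continuous_snd.comp continuous_subtype_val))
  · intro w
    have := dist_nonneg (x := w.1.1) (y := w.1.2)
    positivity


lemma gineq_g0 {M : Type*} [MetricSpace M] :
    GIneq (fun w : Wt M => 1/(1 + dist w.1.1 w.1.2)) := by
  intro x u y hxu huy hxy
  have hs : 0 < dist x u := dist_pos.2 hxu
  have ht : 0 < dist u y := dist_pos.2 huy
  have hr : 0 < dist x y := dist_pos.2 hxy
  have hrst : dist x y ≤ dist x u + dist u y := dist_triangle _ _ _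
  simp only
  have e1 : dist x y * (1/(1 + dist x y)) = dist x y / (1 + dist x y) := by ring
  have e2 : dist x u * (1/(1 + dist x u)) = dist x u / (1 + dist x u) := by ring
  have e3 : dist u y * (1/(1 + dist u y)) = dist u y / (1 + dist u y) := by ring
  rw [e1, e2, e3]
  have e4 : dist x y / (1 + dist x y) ≤ (dist x u + dist u y)/(1 + (dist x u + dist u y)) :=
    psi_mono hr.le hrst
  have e5 := psi_slack hs.le ht.le
  have e6 : 0 ≤ dist x u * dist u y/((1 + dist x u)*(1 + dist u y)) := by positivity
  have hrw : (1:ℝ) + (dist x u + dist u y) = 1 + dist x u + dist u y := by ring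
  rw [hrw] at e4
  linarith

lemma gineq_gfun {M : Type*} [MetricSpace M] (a b : M) (hab : a ≠ b) {δ : ℝ}
    (hδ0 : 0 < δ) (hδ : δ ≤ dist a b / 2) :
    GIneq (fun w : Wt M => 1/(1 + dist w.1.1 w.1.2)
      + (1/((1+2/δ)*(1+2*dist a b))) * hfun a b δ w) := by
  intro x u y hxu huy hxy
  have hD : 0 < dist a b := dist_pos.2 hab
  have hL : (0:ℝ) < 2/δ := by positivity
  have hT : (0:ℝ) < 2*dist a b := by positivity
  have hs : 0 < dist x u := dist_pos.2 hxu
  have ht : 0 < dist u y := dist_pos.2 huy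
  have hr : 0 < dist x y := dist_pos.2 hxy
  have hrst : dist x y ≤ dist x u + dist u y := dist_triangle _ _ _
  set c := 1/((1+2/δ)*(1+2*dist a b)) with hcdef
  simp only
  have expand : ∀ (z : ℝ) (v : ℝ), z * (1/(1+z) + c * v) = z/(1+z) + c * (z * v) := by
    intro z v; ring
  rw [expand, expand, expand]
  have bd1 : hfun a b δ ⟨(x,u),hxu⟩ < 1 → dist x u ≤ 2*dist a b := by
    intro h
    obtain ⟨h1, h2⟩ := hfun_lt_one a b hδ0 hxu h
    calc dist x u ≤ dist x a + dist a u := dist_triangle _ _ _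
      _ ≤ dist x a + (dist a b + dist b u) := by
          have := dist_triangle a b u; linarith
      _ ≤ 2*dist a b := by
          rw [dist_comm b u] at *; linarith
  have bd2 : hfun a b δ ⟨(u,y),huy⟩ < 1 → dist u y ≤ 2*dist a b := by
    intro h
    obtain ⟨h1, h2⟩ := hfun_lt_one a b hδ0 huy h
    calc dist u y ≤ dist u a + dist a y := dist_triangle _ _ _
      _ ≤ dist u a + (dist a b + dist b y) := by
          have := dist_triangle a b y; linarith
      _ ≤ 2*dist a b := by
          rw [dist_comm b y] at *; linarith
  have hdisj : ¬(hfun a b δ ⟨(x,u),hxu⟩ < 1 ∧ hfun a b δ ⟨(u,y),huy⟩ < 1) := by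
    rintro ⟨h1, h2⟩
    obtain ⟨_, hub⟩ := hfun_lt_one a b hδ0 hxu h1
    obtain ⟨hua, _⟩ := hfun_lt_one a b hδ0 huy h2
    have := dist_triangle a u b
    rw [dist_comm a u] at this
    linarith
  exact key_ineq (2/δ) (2*dist a b) (dist x u) (dist u y) (dist x y)
    (hfun a b δ ⟨(x,y),hxy⟩) (hfun a b δ ⟨(x,u),hxu⟩) (hfun a b δ ⟨(u,y),huy⟩)
    hL hT hs ht hr hrst
    (hfun_nonneg _ _ _ _) (hfun_le_one _ _ _ _)
    (hfun_nonneg _ _ _ _) (hfun_le_one _ _ _ _)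
    (hfun_nonneg _ _ _ _) (hfun_le_one _ _ _ _)
    (hfun_lip1 a b hδ0 hxy huy) (hfun_lip2 a b hδ0 hxy hxu)
    bd1 bd2 hdisj

noncomputable section

def extF {X : Type*} [TopologicalSpace X] (f : X → ℝ) (hf : Continuous f)
    (h0 : ∀ x, 0 ≤ f x) (h2 : ∀ x, f x ≤ 2) : StoneCech X → Set.Icc (0:ℝ) 2 :=
  stoneCechExtend (g := fun x => (⟨f x, h0 x, h2 x⟩ : Set.Icc (0:ℝ) 2))
    (Continuous.subtype_mk hf _)

/-- Extension of a `[0,2]`-valued continuous function to the Stone–Čech compactification. -/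
def extI {X : Type*} [TopologicalSpace X] (f : X → ℝ) (hf : Continuous f)
    (h0 : ∀ x, 0 ≤ f x) (h2 : ∀ x, f x ≤ 2) : StoneCech X → ℝ :=
  fun ζ => (extF f hf h0 h2 ζ : ℝ)

lemma extI_unit {X : Type*} [TopologicalSpace X] (f : X → ℝ) (hf : Continuous f)
    (h0 : ∀ x, 0 ≤ f x) (h2 : ∀ x, f x ≤ 2) (x : X) :
    extI f hf h0 h2 (stoneCechUnit x) = f x := by
  have := congrFun (stoneCechExtend_extends
    (g := fun x => (⟨f x, h0 x, h2 x⟩ : Set.Icc (0:ℝ) 2)) (Continuous.subtype_mk hf _)) x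
  simp only [Function.comp_apply] at this
  simp only [extI, extF, this]

lemma extI_cont {X : Type*} [TopologicalSpace X] (f : X → ℝ) (hf : Continuous f)
    (h0 : ∀ x, 0 ≤ f x) (h2 : ∀ x, f x ≤ 2) :
    Continuous (extI f hf h0 h2) :=
  continuous_subtype_val.comp (continuous_stoneCechExtend _)

end

lemma extI_mem_GSet {M : Type*} [MetricSpace M] (f : Wt M → ℝ) (hf : Continuous f)
    (h0 : ∀ x, 0 ≤ f x) (h2 : ∀ x, f x ≤ 2) (hG : GIneq f) :
    extI f hf h0 h2 ∈ GSet M := by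
  refine ⟨extI_cont _ _ _ _, ?_⟩
  intro x u y hxu huy hxy
  simp only [extI_unit]
  exact hG x u y hxu huy hxy

lemma mem_closure_box {M : Type*} [MetricSpace M] (a b : M) (hab : a ≠ b)
    (ζ : StoneCech (Wt M))
    (hyp : ∀ g ∈ GSet M, g ζ = g (stoneCechUnit (⟨(a,b),hab⟩ : Wt M)))
    {δ : ℝ} (hδ0 : 0 < δ) (hδ : δ ≤ dist a b / 2) :
    ζ ∈ closure (stoneCechUnit ''
      {w : Wt M | dist w.1.1 a < δ ∧ dist w.1.2 b < δ}) := by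
  have hD : 0 < dist a b := dist_pos.2 hab
  have hL : (0:ℝ) < 2/δ := by positivity
  set c := 1/((1+2/δ)*(1+2*dist a b)) with hcdef
  have hc : 0 < c := by rw [hcdef]; positivity
  have hc1 : c ≤ 1 := by
    rw [hcdef, div_le_one (by positivity)]
    nlinarith
  have b10 : ∀ w : Wt M, 0 ≤ 1/(1+dist w.1.1 w.1.2) := fun w => by
    have := dist_nonneg (x := w.1.1) (y := w.1.2); positivity
  have b12 : ∀ w : Wt M, 1/(1+dist w.1.1 w.1.2) ≤ 2 := fun w => by
    have := dist_nonneg (x := w.1.1) (y := w.1.2)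
    rw [div_le_iff₀ (by linarith)]; nlinarith
  have b11 : ∀ w : Wt M, 1/(1+dist w.1.1 w.1.2) ≤ 1 := fun w => by
    have := dist_nonneg (x := w.1.1) (y := w.1.2)
    rw [div_le_one (by linarith)]; linarith
  have bh0 : ∀ w : Wt M, 0 ≤ hfun a b δ w := hfun_nonneg a b δ
  have bh2 : ∀ w : Wt M, hfun a b δ w ≤ 2 := fun w =>
    le_trans (hfun_le_one a b δ w) one_le_two
  have contg : Continuous (fun w : Wt M => 1/(1+dist w.1.1 w.1.2) + c * hfun a b δ w) :=
    continuous_g0.add (continuous_const.mul (continuous_hfun a b δ))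
  have bg0 : ∀ w : Wt M, 0 ≤ 1/(1+dist w.1.1 w.1.2) + c * hfun a b δ w := fun w => by
    have := b10 w; have := bh0 w; have := mul_nonneg hc.le (bh0 w); linarith
  have bg2 : ∀ w : Wt M, 1/(1+dist w.1.1 w.1.2) + c * hfun a b δ w ≤ 2 := fun w => by
    have h1 := b11 w
    have h2 : c * hfun a b δ w ≤ 1 :=
      mul_le_one₀ hc1 (bh0 w) (hfun_le_one a b δ w)
    linarith
  set G0 := extI _ continuous_g0 b10 b12 with hG0
  set Gh := extI _ (continuous_hfun a b δ) bh0 bh2 with hGh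
  set Gg := extI _ contg bg0 bg2 with hGg
  have contG0 : Continuous G0 := by rw [hG0]; exact extI_cont _ _ _ _
  have contGh : Continuous Gh := by rw [hGh]; exact extI_cont _ _ _ _
  have contGg : Continuous Gg := by rw [hGg]; exact extI_cont _ _ _ _
  have hG0mem : G0 ∈ GSet M := by
    rw [hG0]; exact extI_mem_GSet _ _ _ _ gineq_g0
  have hGgmem : Gg ∈ GSet M := by
    rw [hGg]; exact extI_mem_GSet _ _ _ _ (gineq_gfun a b hab hδ0 hδ)
  have hsum : Gg = fun ω => G0 ω + c * Gh ω := by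
    rw [hGg, hG0, hGh]
    apply DenseRange.equalizer denseRange_stoneCechUnit (extI_cont _ _ _ _)
      ((extI_cont _ _ _ _).add (continuous_const.mul (extI_cont _ _ _ _)))
    funext w
    simp only [Function.comp_apply, Pi.add_apply, Pi.mul_apply, extI_unit]
    rfl
  have e1 : Gg ζ = Gg (stoneCechUnit (⟨(a,b),hab⟩ : Wt M)) := hyp _ hGgmem
  have e2 : G0 ζ = G0 (stoneCechUnit (⟨(a,b),hab⟩ : Wt M)) := hyp _ hG0mem
  have e3 : Gg (stoneCechUnit (⟨(a,b),hab⟩ : Wt M))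
      = G0 (stoneCechUnit (⟨(a,b),hab⟩ : Wt M)) := by
    rw [hGg, hG0]
    simp only [extI_unit]
    rw [hfun_base a b hδ0 hab]
    ring
  have e5 := congrFun hsum ζ
  have e4 : Gh ζ = 0 := by
    have h6 : c * Gh ζ = 0 := by linarith
    rcases mul_eq_zero.1 h6 with h | h
    · exact absurd h hc.ne'
    · exact h
  rw [mem_closure_iff]
  intro o ho hζo
  have hopen : IsOpen (o ∩ Gh ⁻¹' Set.Iio 1) := ho.inter (isOpen_Iio.preimage contGh)
  have hne : (o ∩ Gh ⁻¹' Set.Iio 1).Nonempty := ⟨ζ, hζo, by simp [e4]⟩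
  obtain ⟨w, hw⟩ := denseRange_stoneCechUnit.exists_mem_open hopen hne
  refine ⟨stoneCechUnit w, hw.1, ⟨w, ?_, rfl⟩⟩
  have hlt : Gh (stoneCechUnit w) < 1 := hw.2
  rw [hGh, extI_unit] at hlt
  obtain ⟨⟨x, u⟩, hxu⟩ := w
  exact hfun_lt_one a b hδ0 hxu hlt

lemma sep {M : Type*} [MetricSpace M] (p : Wt M) (ζ : StoneCech (Wt M))
    (hyp : ∀ g ∈ GSet M, g ζ = g (stoneCechUnit p)) : ζ = stoneCechUnit p := by
  obtain ⟨⟨a, b⟩, hab⟩ := p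
  have hab' : a ≠ b := hab
  have hD : 0 < dist a b := dist_pos.2 hab'
  have main : ∀ F : StoneCech (Wt M) → ℝ, Continuous F →
      F ζ = F (stoneCechUnit (⟨(a,b),hab⟩ : Wt M)) := by
    intro F hF
    have hd : ∀ ε : ℝ, 0 < ε →
        dist (F ζ) (F (stoneCechUnit (⟨(a,b),hab⟩ : Wt M))) ≤ ε := by
      intro ε hε
      have hcont : Continuous (fun w : Wt M => F (stoneCechUnit w)) :=
        hF.comp continuous_stoneCechUnit
      obtain ⟨δ'', hδ''0, hδ''⟩ :=
        Metric.continuous_iff.1 hcont ⟨(a,b),hab⟩ ε hε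
      set δ := min δ'' (dist a b / 2) with hδdef
      have hδ0 : 0 < δ := lt_min hδ''0 (by linarith)
      have hcl := mem_closure_box a b hab' ζ hyp hδ0 (min_le_right _ _)
      have himg : F ζ ∈ closure (F '' (stoneCechUnit ''
          {w : Wt M | dist w.1.1 a < δ ∧ dist w.1.2 b < δ})) :=
        (image_closure_subset_closure_image hF) ⟨ζ, hcl, rfl⟩
      have hsub : F '' (stoneCechUnit ''
          {w : Wt M | dist w.1.1 a < δ ∧ dist w.1.2 b < δ})
          ⊆ Metric.closedBall (F (stoneCechUnit (⟨(a,b),hab⟩ : Wt M))) ε := by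
        rintro _ ⟨_, ⟨w, hwmem, rfl⟩, rfl⟩
        have hdeq : dist w (⟨(a,b),hab⟩ : Wt M)
            = max (dist w.1.1 a) (dist w.1.2 b) := by
          rw [Subtype.dist_eq, Prod.dist_eq]
        have hwd : dist w (⟨(a,b),hab⟩ : Wt M) < δ'' := by
          rw [hdeq]
          exact lt_of_lt_of_le (max_lt hwmem.1 hwmem.2) (min_le_left _ _)
        exact Metric.mem_closedBall.2 (le_of_lt (hδ'' w hwd))
      have hfinal := closure_minimal hsub Metric.isClosed_closedBall
      exact Metric.mem_closedBall.1 (hfinal himg)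
    have h0 : dist (F ζ) (F (stoneCechUnit (⟨(a,b),hab⟩ : Wt M))) ≤ 0 := by
      by_contra hcon
      push_neg at hcon
      have := hd (dist (F ζ) (F (stoneCechUnit (⟨(a,b),hab⟩ : Wt M))) / 2)
        (by linarith)
      linarith
    exact dist_le_zero.1 h0
  by_contra hne
  have hdisj : Disjoint ({ζ} : Set (StoneCech (Wt M)))
      {stoneCechUnit (⟨(a,b),hab⟩ : Wt M)} := by
    rw [Set.disjoint_singleton_left]
    simpa using hne
  obtain ⟨f, hf0, hf1, -⟩ :=
    exists_continuous_zero_one_of_isClosed isClosed_singleton isClosed_singleton hdisj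
  have hmf := main f f.continuous
  have h1 : f ζ = 0 := hf0 rfl
  have h2 : f (stoneCechUnit (⟨(a,b),hab⟩ : Wt M)) = 1 := hf1 rfl
  rw [h1, h2] at hmf
  norm_num at hmf

lemma t2Q {M : Type*} [MetricSpace M] : T2Space (Quotient (gSetoid M)) := by
  constructor
  intro x y hxy
  obtain ⟨ζ, rfl⟩ := Quotient.exists_rep x
  obtain ⟨ω, rfl⟩ := Quotient.exists_rep y
  have hnr : ¬ ∀ g ∈ GSet M, g ζ = g ω := fun h => hxy (Quotient.sound h)
  push_neg at hnr
  obtain ⟨g, hg, hne⟩ := hnr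
  have hcont : Continuous (Quotient.lift g (fun u v huv => huv g hg) :
      Quotient (gSetoid M) → ℝ) := hg.1.quotient_lift _
  exact separated_by_continuous hcont hne

end Stmt7Aux

theorem stmt7 {M : Type*} [MetricSpace M]
    (h3 : ∃ x y z : M, x ≠ y ∧ x ≠ z ∧ y ≠ z) :
    (∀ (p : Wt M) (ζ : StoneCech (Wt M)),
        (∀ g ∈ GSet M, g ζ = g (stoneCechUnit p)) → ζ = stoneCechUnit p) ∧
    Set.InjOn (gq M) (Set.range (stoneCechUnit : Wt M → StoneCech (Wt M))) ∧
    ∃ e : ↥(Set.range (stoneCechUnit : Wt M → StoneCech (Wt M))) ≃ₜ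
        ↥(gq M '' Set.range (stoneCechUnit : Wt M → StoneCech (Wt M))),
      ∀ x, (e x : Quotient (gSetoid M)) = gq M (x : StoneCech (Wt M)) := by
  have part1 : ∀ (p : Wt M) (ζ : StoneCech (Wt M)),
      (∀ g ∈ GSet M, g ζ = g (stoneCechUnit p)) → ζ = stoneCechUnit p :=
    fun p ζ h => Stmt7Aux.sep p ζ h
  have part2 : Set.InjOn (gq M)
      (Set.range (stoneCechUnit : Wt M → StoneCech (Wt M))) := by
    rintro _ ⟨p, rfl⟩ _ ⟨p', rfl⟩ hq
    exact part1 p' (stoneCechUnit p) (Quotient.exact hq)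
  refine ⟨part1, part2, ?_⟩
  haveI hT2 : T2Space (Quotient (gSetoid M)) := Stmt7Aux.t2Q
  have hqc : Continuous (gq M) := continuous_quot_mk
  have hqclosed : IsClosedMap (gq M) := hqc.isClosedMap
  set S := Set.range (stoneCechUnit : Wt M → StoneCech (Wt M)) with hS
  have hsat : ∀ (d s : StoneCech (Wt M)), s ∈ S → gq M d = gq M s → d = s := by
    rintro d _ ⟨p, rfl⟩ h
    exact part1 p d (Quotient.exact h)
  set φ : ↥S → ↥(gq M '' S) := fun x => ⟨gq M x.1, ⟨x.1, x.2, rfl⟩⟩ with hφ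
  have hφinj : Function.Injective φ := by
    intro x y hxy
    have h1 : gq M x.1 = gq M y.1 := congrArg Subtype.val hxy
    exact Subtype.ext (part2 x.2 y.2 h1)
  have hφsurj : Function.Surjective φ := by
    rintro ⟨_, ⟨k, hk, rfl⟩⟩
    exact ⟨⟨k, hk⟩, rfl⟩
  have hφcont : Continuous φ :=
    Continuous.subtype_mk (hqc.comp continuous_subtype_val) _
  have hφclosed : IsClosedMap φ := by
    intro C hC
    obtain ⟨C', hC', hCeq⟩ := isClosed_induced_iff.1 hC
    set A := Subtype.val '' C with hA
    have hAsub : A ⊆ C' := by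
      rintro _ ⟨x, hx, rfl⟩
      rw [← hCeq] at hx
      exact hx
    have hkey : φ '' C = Subtype.val ⁻¹' (gq M '' closure A) := by
      ext y
      constructor
      · rintro ⟨x, hx, rfl⟩
        exact ⟨x.1, subset_closure ⟨x, hx, rfl⟩, rfl⟩
      · rintro ⟨d, hd, hdq⟩
        obtain ⟨s, hsS, hsq⟩ := y.2
        have hds : d = s := hsat d s hsS (by rw [hdq, hsq])
        have hdC' : d ∈ C' := closure_minimal hAsub hC' hd
        have hdS : d ∈ S := hds ▸ hsS
        have hxC : (⟨d, hdS⟩ : ↥S) ∈ C := by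
          rw [← hCeq]
          exact hdC'
        exact ⟨⟨d, hdS⟩, hxC, Subtype.ext hdq⟩
    rw [hkey]
    exact (hqclosed _ isClosed_closure).preimage continuous_subtype_val
  refine ⟨{ toEquiv := Equiv.ofBijective φ ⟨hφinj, hφsurj⟩,
            continuous_toFun := hφcont,
            continuous_invFun := ?_ }, fun x => rfl⟩
  rw [continuous_iff_isClosed]
  intro C hC
  have himg : (Equiv.ofBijective φ ⟨hφinj, hφsurj⟩).invFun ⁻¹' C = φ '' C := by
    have h0 : (Equiv.ofBijective φ ⟨hφinj, hφsurj⟩).invFun ⁻¹' C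
        = ⇑(Equiv.ofBijective φ ⟨hφinj, hφsurj⟩).symm ⁻¹' C := rfl
    rw [h0, ← Equiv.image_eq_preimage_symm]
    rfl
  rw [himg]
  exact hφclosed C hC
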